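/- Let K ⊆ ℝ^d be a measurable set with finite positive Lebesgue measure |K|, let h : ℝ^d → ℝ be Lebesgue-integrable with h = 0 outside K, and let δ ∈ (0, 1/|K|). Suppose λ* > 0 satisfies ∫_K max{h(x)/λ*, δ} dx = 1, and define p*(x) = max{h(x)/λ*, δ} for x ∈ K and p*(x) = 0 for x ∉ K, with h·log p* Lebesgue-integrable on K. Then for every measurable q : ℝ^d → ℝ with q(x) ≥ δ for all x ∈ K, q(x) = 0 for x ∉ K, ∫_{ℝ^d} q(x) dx = 1, and h·log q Lebesgue-integrable on K, one has ∫_K h(x) log q(x) dx ≤ ∫_K h(x) log p*(x) dx. -/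

import Mathlib

open MeasureTheory Real Classical

/-- **MCLR optimal solution (paper's Theorem 1).**
Let `K ⊆ ℝ^d` be measurable with finite positive Lebesgue measure, `h` integrable with
`h = 0` outside `K`, `δ ∈ (0, 1/|K|)`, and `λ* > 0` with `∫_K max (h x / λ*) δ = 1`.
Define `p* x = max (h x / λ*) δ` on `K` and `0` elsewhere.  Then `p*` maximizes
`∫_K h (x) log q(x) dx` over all densities `q` with `q ≥ δ` on `K`, `q = 0` off `K`,
and `∫ q = 1`. -/
theorem mclr_optimal_solution {d : ℕ}
    (K : Set (Fin d → ℝ)) (hKmeas : MeasurableSet K)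
    (hKpos : 0 < volume K) (hKfin : volume K < ⊤)
    (h : (Fin d → ℝ) → ℝ) (hhint : Integrable h)
    (hhsupp : ∀ x ∉ K, h x = 0)
    (δ : ℝ) (hδpos : 0 < δ) (hδlt : δ < 1 / (volume K).toReal)
    (lam : ℝ) (hlam : 0 < lam)
    (hnorm : ∫ x in K, max (h x / lam) δ = 1)
    (pstar : (Fin d → ℝ) → ℝ)
    (hpstar : ∀ x, pstar x = if x ∈ K then max (h x / lam) δ else 0)
    (hpstarlog : IntegrableOn (fun x => h x * Real.log (pstar x)) K)
    (q : (Fin d → ℝ) → ℝ) (hqmeas : Measurable q)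
    (hqδ : ∀ x ∈ K, δ ≤ q x) (hq0 : ∀ x ∉ K, q x = 0)
    (hqnorm : ∫ x, q x = 1)
    (hqlog : IntegrableOn (fun x => h x * Real.log (q x)) K) :
    ∫ x in K, h x * Real.log (q x) ≤ ∫ x in K, h x * Real.log (pstar x) := by
  have hqint : Integrable q := by
    by_contra hc
    rw [integral_undef hc] at hqnorm; norm_num at hqnorm
  have hKq : ∫ x in K, q x = 1 := by
    have h0 : ∫ x in Kᶜ, q x = 0 := by
      rw [setIntegral_congr_fun hKmeas.compl (fun x hx => hq0 x hx)]
      simp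
    have h1 := integral_add_compl hKmeas hqint
    rw [h0, add_zero] at h1
    rw [h1, hqnorm]
  have hpint : IntegrableOn pstar K := by
    have hm : IntegrableOn (fun x => max (h x / lam) δ) K :=
      (hhint.integrableOn.div_const lam).sup (integrableOn_const hKfin.ne)
    exact hm.congr_fun (fun x hx => (hpstar x ▸ (if_pos hx).symm)) hKmeas
  have hKp : ∫ x in K, pstar x = 1 := by
    rw [setIntegral_congr_fun hKmeas (fun x hx => by rw [hpstar x, if_pos hx])]
    exact hnorm
  have key : ∀ x ∈ K,
      h x * Real.log (q x) ≤ h x * Real.log (pstar x) + lam * (q x - pstar x) := by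
    intro x hx
    have hq' : δ ≤ q x := hqδ x hx
    have hqpos : 0 < q x := lt_of_lt_of_le hδpos hq'
    rw [hpstar x, if_pos hx]
    rcases le_or_gt δ (h x / lam) with hcase | hcase
    · rw [max_eq_left hcase]
      set p := h x / lam with hp_def
      have hp : 0 < p := lt_of_lt_of_le hδpos hcase
      have hlog : Real.log (q x / p) ≤ q x / p - 1 :=
        Real.log_le_sub_one_of_pos (div_pos hqpos hp)
      rw [Real.log_div (ne_of_gt hqpos) (ne_of_gt hp)] at hlog
      have h2 := mul_le_mul_of_nonneg_left hlog hp.le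
      have h3 : p * (q x / p - 1) = q x - p := by field_simp
      have h4 : p * Real.log (q x) - p * Real.log p ≤ q x - p := by nlinarith
      have hx_eq : h x = lam * p := by rw [hp_def]; field_simp
      nlinarith [mul_le_mul_of_nonneg_left h4 hlam.le]
    · rw [max_eq_right hcase.le]
      have hC : h x ≤ lam * δ := by
        have := (div_lt_iff₀ hlam).mp hcase
        linarith
      have hA : Real.log δ ≤ Real.log (q x) := Real.log_le_log hδpos hq'
      have hlog : Real.log (q x / δ) ≤ q x / δ - 1 :=
        Real.log_le_sub_one_of_pos (div_pos hqpos hδpos)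
      rw [Real.log_div (ne_of_gt hqpos) (ne_of_gt hδpos)] at hlog
      have hB : δ * (Real.log (q x) - Real.log δ) ≤ q x - δ := by
        have h3 : δ * (q x / δ - 1) = q x - δ := by field_simp
        nlinarith [mul_le_mul_of_nonneg_left hlog hδpos.le]
      nlinarith [mul_le_mul_of_nonneg_right hC (sub_nonneg.2 hA),
        mul_le_mul_of_nonneg_left hB hlam.le]
  have hsub : IntegrableOn (fun x => lam * (q x - pstar x)) K := by
    exact (hqint.integrableOn.sub hpint).const_mul lam
  have hrhs : IntegrableOn
      (fun x => h x * Real.log (pstar x) + lam * (q x - pstar x)) K :=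
    hpstarlog.add hsub
  have hineq := setIntegral_mono_on hqlog hrhs hKmeas key
  rw [integral_add hpstarlog hsub, integral_const_mul,
    integral_sub hqint.integrableOn hpint, hKq, hKp] at hineq
  simpa using hineq
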